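/- Let d ≥ 1, k ∈ (1,2], and let V : ℝ^d → [1, ∞) be continuous with constants c_V, r_V > 0 such that c_V|x|^k ≤ V(x) whenever |x| ≥ r_V. Let κ > 0 and let L : ℝ^d → ℝ^d satisfy L(x) = 0 for |x| ≤ 1 and |L(x)| ≤ κ|x|^{k−1} for all x. Set p₁ = k/(k−1). If ℏ, 𝔞 > 0 satisfy 𝔞κ/p₁ < c_V ℏ and 𝔞κ/k + 𝔞/2 < ℏ/2, then the function F₀(x,v,z) = ℏ(V(x) + |v|²/2 + |z|²/2) + 𝔞⟨L(x), v⟩ + 𝔞⟨v, z⟩ is bounded from below on ℝ^{3d}. -/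

import Mathlib

set_option maxHeartbeats 1000000


open scoped InnerProductSpace

/-- If `V : ℝ^d → [1,∞)` is continuous with `c_V|x|^k ≤ V(x)` for
`|x| ≥ r_V` (`k ∈ (1,2]`), `L` vanishes on the unit ball with `|L(x)| ≤ κ|x|^{k-1}`, and
`ℏ, 𝔞 > 0` satisfy `𝔞κ/p₁ < c_V ℏ` (with `p₁ = k/(k-1)`) and `𝔞κ/k + 𝔞/2 < ℏ/2`, then
`F₀(x,v,z) = ℏ(V(x) + |v|²/2 + |z|²/2) + 𝔞⟨L(x), v⟩ + 𝔞⟨v, z⟩` is bounded from below on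
`ℝ^{3d}`. -/
theorem stmt_9 {d : ℕ} (hd : 1 ≤ d) (k : ℝ) (hk1 : 1 < k) (hk2 : k ≤ 2)
    (V : EuclideanSpace ℝ (Fin d) → ℝ) (hV1 : ∀ x, 1 ≤ V x) (hVc : Continuous V)
    (cV rV : ℝ) (hcV : 0 < cV) (hrV : 0 < rV)
    (hgrow : ∀ x : EuclideanSpace ℝ (Fin d), rV ≤ ‖x‖ → cV * ‖x‖ ^ k ≤ V x)
    (κ : ℝ) (hκ : 0 < κ)
    (L : EuclideanSpace ℝ (Fin d) → EuclideanSpace ℝ (Fin d))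
    (hL0 : ∀ x : EuclideanSpace ℝ (Fin d), ‖x‖ ≤ 1 → L x = 0)
    (hLbound : ∀ x : EuclideanSpace ℝ (Fin d), ‖L x‖ ≤ κ * ‖x‖ ^ (k - 1))
    (hbar 𝔞 : ℝ) (hhbar : 0 < hbar) (h𝔞 : 0 < 𝔞)
    (hcond1 : 𝔞 * κ / (k / (k - 1)) < cV * hbar)
    (hcond2 : 𝔞 * κ / k + 𝔞 / 2 < hbar / 2) :
    ∃ m : ℝ, ∀ x v z : EuclideanSpace ℝ (Fin d),
      m ≤ hbar * (V x + ‖v‖ ^ 2 / 2 + ‖z‖ ^ 2 / 2) + 𝔞 * ⟪L x, v⟫_ℝ + 𝔞 * ⟪v, z⟫_ℝ := by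
  have hk0 : 0 < k := lt_trans one_pos hk1
  have hk1' : 0 < k - 1 := by linarith
  set p : ℝ := k / (k - 1) with hp
  have hpq : k.HolderConjugate p := Real.HolderConjugate.conjExponent hk1
  have hppos : 0 < p := hpq.symm.pos
  refine ⟨min 0 (hbar - 𝔞 * κ / p * rV ^ k) - 𝔞 * κ / k, fun x v z => ?_⟩
  -- basic nonneg facts
  have hxnn : (0:ℝ) ≤ ‖x‖ := norm_nonneg x
  have hvnn : (0:ℝ) ≤ ‖v‖ := norm_nonneg v
  -- inner product bounds
  have h1 : |⟪L x, v⟫_ℝ| ≤ ‖L x‖ * ‖v‖ := abs_real_inner_le_norm _ _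
  have h2 : ‖L x‖ * ‖v‖ ≤ κ * ‖x‖ ^ (k - 1) * ‖v‖ :=
    mul_le_mul_of_nonneg_right (hLbound x) hvnn
  have h4 : |⟪v, z⟫_ℝ| ≤ ‖v‖ * ‖z‖ := abs_real_inner_le_norm _ _
  have h4' : ‖v‖ * ‖z‖ ≤ ‖v‖ ^ 2 / 2 + ‖z‖ ^ 2 / 2 := by nlinarith [sq_nonneg (‖v‖ - ‖z‖)]
  -- Young's inequality
  have h3 : ‖v‖ * ‖x‖ ^ (k - 1) ≤ ‖v‖ ^ k / k + ‖x‖ ^ k / p := by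
    have := Real.young_inequality_of_nonneg hvnn (Real.rpow_nonneg hxnn (k - 1)) hpq
    have hxx : (‖x‖ ^ (k - 1)) ^ p = ‖x‖ ^ k := by
      rw [← Real.rpow_mul hxnn]
      congr 1
      rw [hp]; field_simp [hk1'.ne']
    rw [hxx] at this
    exact this
  -- v^k ≤ v^2 + 1
  have h5 : ‖v‖ ^ k ≤ ‖v‖ ^ 2 + 1 := by
    rcases le_or_gt ‖v‖ 1 with h | h
    · have : ‖v‖ ^ k ≤ 1 := Real.rpow_le_one hvnn h (le_of_lt hk0)
      nlinarith [sq_nonneg ‖v‖]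
    · have h2' : ‖v‖ ^ k ≤ ‖v‖ ^ (2:ℝ) :=
        Real.rpow_le_rpow_of_exponent_le (le_of_lt h) hk2
      have : ‖v‖ ^ (2:ℝ) = ‖v‖ ^ 2 := by
        rw [← Real.rpow_natCast ‖v‖ 2]; norm_num
      rw [this] at h2'
      linarith
  -- x part
  have hxpart : min 0 (hbar - 𝔞 * κ / p * rV ^ k) ≤ hbar * V x - 𝔞 * κ / p * ‖x‖ ^ k := by
    have hcoef : 0 ≤ 𝔞 * κ / p := by positivity
    rcases le_or_gt rV ‖x‖ with h | h
    · have hg := hgrow x h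
      have hxk : (0:ℝ) ≤ ‖x‖ ^ k := Real.rpow_nonneg hxnn k
      have : 𝔞 * κ / p * ‖x‖ ^ k ≤ cV * hbar * ‖x‖ ^ k :=
        mul_le_mul_of_nonneg_right (le_of_lt hcond1) hxk
      have h6 : cV * hbar * ‖x‖ ^ k ≤ hbar * V x := by
        calc cV * hbar * ‖x‖ ^ k = hbar * (cV * ‖x‖ ^ k) := by ring
          _ ≤ hbar * V x := mul_le_mul_of_nonneg_left hg (le_of_lt hhbar)
      exact le_trans (min_le_left _ _) (by linarith)
    · have hxk : ‖x‖ ^ k ≤ rV ^ k :=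
        Real.rpow_le_rpow hxnn (le_of_lt h) (le_of_lt hk0)
      have h7 : 𝔞 * κ / p * ‖x‖ ^ k ≤ 𝔞 * κ / p * rV ^ k :=
        mul_le_mul_of_nonneg_left hxk hcoef
      have h8 : hbar * 1 ≤ hbar * V x := mul_le_mul_of_nonneg_left (hV1 x) (le_of_lt hhbar)
      exact le_trans (min_le_right _ _) (by linarith)
  -- combine
  have hI1 : - (κ * (‖v‖ ^ k / k + ‖x‖ ^ k / p)) ≤ ⟪L x, v⟫_ℝ := by
    have : κ * ‖x‖ ^ (k - 1) * ‖v‖ ≤ κ * (‖v‖ ^ k / k + ‖x‖ ^ k / p) := by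
      have := mul_le_mul_of_nonneg_left h3 (le_of_lt hκ)
      nlinarith [this]
    have habs := neg_abs_le ⟪L x, v⟫_ℝ
    linarith [le_trans h1 h2]
  have hI2 : - (‖v‖ ^ 2 / 2 + ‖z‖ ^ 2 / 2) ≤ ⟪v, z⟫_ℝ := by
    have habs := neg_abs_le ⟪v, z⟫_ℝ
    linarith [le_trans h4 h4']
  have hvk : - (𝔞 * κ / k) * (‖v‖ ^ 2 + 1) ≤ - (𝔞 * κ / k) * ‖v‖ ^ k := by
    have hc : 0 ≤ 𝔞 * κ / k := by positivity
    nlinarith [h5]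
  have hz2 : (0:ℝ) ≤ ‖z‖ ^ 2 := sq_nonneg _
  have hv2 : (0:ℝ) ≤ ‖v‖ ^ 2 := sq_nonneg _
  have hi1 : 𝔞 * (- (κ * (‖v‖ ^ k / k + ‖x‖ ^ k / p))) ≤ 𝔞 * ⟪L x, v⟫_ℝ :=
    mul_le_mul_of_nonneg_left hI1 (le_of_lt h𝔞)
  have hi2 : 𝔞 * (- (‖v‖ ^ 2 / 2 + ‖z‖ ^ 2 / 2)) ≤ 𝔞 * ⟪v, z⟫_ℝ :=
    mul_le_mul_of_nonneg_left hI2 (le_of_lt h𝔞)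
  have hak : 0 < 𝔞 * κ / k := by positivity
  have hcoefv : 0 < hbar / 2 - 𝔞 / 2 - 𝔞 * κ / k := by linarith
  have e1 : 𝔞 * -(κ * (‖v‖ ^ k / k + ‖x‖ ^ k / p)) =
      -(𝔞 * κ / k * ‖v‖ ^ k) - 𝔞 * κ / p * ‖x‖ ^ k := by
    ring
  rw [e1] at hi1
  have e2 : 𝔞 * -(‖v‖ ^ 2 / 2 + ‖z‖ ^ 2 / 2) = -(𝔞 * ‖v‖ ^ 2 / 2) - 𝔞 * ‖z‖ ^ 2 / 2 := by ring
  rw [e2] at hi2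
  have hvk' : -(𝔞 * κ / k * ‖v‖ ^ 2) - 𝔞 * κ / k ≤ -(𝔞 * κ / k * ‖v‖ ^ k) := by linarith [hvk]
  linarith [hxpart, hi1, hi2, hvk', mul_nonneg (le_of_lt hcoefv) hv2,
    mul_nonneg (by linarith : (0:ℝ) ≤ hbar / 2 - 𝔞 / 2) hz2]
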